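/- arXiv:2105.13590 — 2 statements merged into one kernel-verified Lean document; each statement's English description precedes it below -/
import Mathlib

section
/- Let A be a subset of the negative reals satisfying the descending chain condition, and let B be a subset of the non-negative reals satisfying the descending chain condition. Then the set T = { (-α)/(β - α) : α ∈ A, β ∈ B } is contained in (0,1] and satisfies the ascending chain condition, i.e. T contains no strictly increasing infinite sequence. -/
theorem stmt_3 (A B : Set ℝ)
    (hA : A ⊆ Set.Iio 0) (hB : B ⊆ Set.Ici 0)
    (hADCC : ¬ ∃ f : ℕ → ℝ, (∀ n, f n ∈ A) ∧ StrictAnti f)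
    (hBDCC : ¬ ∃ f : ℕ → ℝ, (∀ n, f n ∈ B) ∧ StrictAnti f)
    (T : Set ℝ)
    (hT : T = {t : ℝ | ∃ α ∈ A, ∃ β ∈ B, t = (-α) / (β - α)}) :
    T ⊆ Set.Ioc 0 1 ∧ ¬ ∃ f : ℕ → ℝ, (∀ n, f n ∈ T) ∧ StrictMono f := by
  subst hT
  have hApwo : A.IsPWO := by
    refine Set.IsWF.isPWO (Set.isWF_iff_no_descending_seq.2 ?_)
    intro f hf hmem
    exact hADCC ⟨f, fun n => hmem n, hf⟩
  have hBpwo : B.IsPWO := by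
    refine Set.IsWF.isPWO (Set.isWF_iff_no_descending_seq.2 ?_)
    intro f hf hmem
    exact hBDCC ⟨f, fun n => hmem n, hf⟩
  have hprod : (A ×ˢ B).IsPWO := hApwo.prod hBpwo
  constructor
  · rintro t ⟨α, hα, β, hβ, rfl⟩
    have hα0 : α < 0 := hA hα
    have hβ0 : (0:ℝ) ≤ β := hB hβ
    have hd : 0 < β - α := by linarith
    constructor
    · exact div_pos (by linarith) hd
    · rw [div_le_one hd]; linarith
  · rintro ⟨f, hmem, hmono⟩
    choose α hαA β hβB hfeq using hmem
    obtain ⟨m, n, hmn, hle⟩ := hprod (fun n => ⟨(α n, β n), hαA n, hβB n⟩)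
    have h1 : α m ≤ α n := hle.1
    have h2 : β m ≤ β n := hle.2
    have hαm : α m < 0 := hA (hαA m)
    have hαn : α n < 0 := hA (hαA n)
    have hβm : (0:ℝ) ≤ β m := hB (hβB m)
    have hβn : (0:ℝ) ≤ β n := hB (hβB n)
    have hdm : 0 < β m - α m := by linarith
    have hdn : 0 < β n - α n := by linarith
    have : f n ≤ f m := by
      rw [hfeq m, hfeq n, div_le_div_iff₀ hdn hdm]
      nlinarith
    exact absurd (hmono hmn) (not_lt.2 this)
end

section
/- Let a_1, ..., a_k be positive reals with a_1 + ... + a_k = 1, let m and d be positive integers, and set M := 2d. Let A := { (a_1 n_1 + ... + a_k n_k)/m : n_i ∈ Z, n_i ≥ -mM } ∩ (-∞, 0) and let B := { (c_1 n'_1 + ... + c_l n'_l)/m : n'_i ∈ Z, n'_i ≥ 0 } ∩ [0, ∞), where c_1, ..., c_l are positive reals with c_1 + ... + c_l = 1. Then for any nonempty family (α_j, β_j)_{j ∈ Λ} with α_j ∈ A and β_j ∈ B, the set { (-α_j)/(β_j - α_j) : j ∈ Λ } attains its supremum; that is, there exists j_0 ∈ Λ with (-α_{j_0})/(β_{j_0}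 - α_{j_0}) = sup_{j ∈ Λ} (-α_j)/(β_j - α_j). -/
lemma aux_fin {k : ℕ} (a : Fin k → ℝ) (ha : ∀ i, 0 < a i) (m : ℝ) (hm : 0 < m)
    (lo : Fin k → ℤ) (C : ℝ) :
    Set.Finite {x : ℝ | (∃ nn : Fin k → ℤ, (∀ i, lo i ≤ nn i) ∧
      x = (∑ i, a i * (nn i : ℝ)) / m) ∧ x ≤ C} := by
  classical
  set D : ℝ := C * m - ∑ j, a j * (lo j : ℝ) with hD
  set hi : Fin k → ℤ := fun i => lo i + ⌈D / a i⌉ with hhi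
  apply Set.Finite.subset
    (Set.Finite.image (fun nn : Fin k → ℤ => (∑ i, a i * (nn i : ℝ)) / m)
      (Set.Finite.pi (fun i => Set.finite_Icc (lo i) (hi i))))
  rintro x ⟨⟨nn, h1, h2⟩, h3⟩
  refine ⟨nn, fun i _ => ⟨h1 i, ?_⟩, h2.symm⟩
  have hsum : ∑ i, a i * (nn i : ℝ) ≤ C * m := by
    rw [h2] at h3; exact (div_le_iff₀ hm).mp h3
  have hterm : a i * ((nn i : ℝ) - lo i) ≤ D := by
    have h4 : ∑ j, a j * ((nn j : ℝ) - lo j) ≤ D := by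
      have heq : ∑ j, a j * ((nn j : ℝ) - lo j)
          = ∑ j, a j * (nn j : ℝ) - ∑ j, a j * (lo j : ℝ) := by
        rw [← Finset.sum_sub_distrib]
        exact Finset.sum_congr rfl fun j _ => by ring
      rw [heq, hD]; linarith
    refine le_trans (Finset.single_le_sum (f := fun j => a j * ((nn j : ℝ) - lo j))
      ?_ (Finset.mem_univ i)) h4
    intro j _
    have : (lo j : ℝ) ≤ (nn j : ℝ) := by exact_mod_cast h1 j
    exact mul_nonneg (ha j).le (by linarith)
  have h5 : (nn i : ℝ) - lo i ≤ D / a i := by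
    rw [le_div_iff₀ (ha i)]; linarith
  have h6 : (nn i : ℝ) ≤ (lo i : ℝ) + ⌈D / a i⌉ := by
    have := Int.le_ceil (D / a i); linarith
  show nn i ≤ lo i + ⌈D / a i⌉
  exact_mod_cast h6

theorem stmt_9 (k l m d : ℕ) (hk : 0 < k) (hl : 0 < l) (hm : 0 < m) (hd : 0 < d)
    (a : Fin k → ℝ) (ha : ∀ i, 0 < a i) (hasum : ∑ i, a i = 1)
    (c : Fin l → ℝ) (hc : ∀ i, 0 < c i) (hcsum : ∑ i, c i = 1)
    (M : ℕ) (hM : M = 2 * d)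
    (A B : Set ℝ)
    (hA : A = {x : ℝ | ∃ nn : Fin k → ℤ, (∀ i, -(m * M : ℤ) ≤ nn i) ∧
      x = (∑ i, a i * (nn i : ℝ)) / (m : ℝ)} ∩ Set.Iio 0)
    (hB : B = {x : ℝ | ∃ nn : Fin l → ℤ, (∀ i, 0 ≤ nn i) ∧
      x = (∑ i, c i * (nn i : ℝ)) / (m : ℝ)} ∩ Set.Ici 0)
    (Λ : Type*) [Nonempty Λ]
    (α β : Λ → ℝ) (hα : ∀ j, α j ∈ A) (hβ : ∀ j, β j ∈ B) :
    ∃ j₀ : Λ, (-(α j₀)) / (β j₀ - α j₀) = ⨆ j : Λ, (-(α j)) / (β j - α j) := by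
  classical
  have hmR : (0 : ℝ) < m := by exact_mod_cast hm
  -- basic facts about α and β
  have hαneg : ∀ j, α j < 0 := fun j => (hA ▸ hα j).2
  have hβ0 : ∀ j, (0 : ℝ) ≤ β j := fun j => (hB ▸ hβ j).2
  have hden : ∀ j, 0 < β j - α j := fun j => by linarith [hαneg j, hβ0 j]
  set t : Λ → ℝ := fun j => (-(α j)) / (β j - α j) with htdef
  have ht_pos : ∀ j, 0 < t j := fun j => div_pos (by linarith [hαneg j]) (hden j)
  have ht_le1 : ∀ j, t j ≤ 1 := fun j => by
    rw [htdef]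
    rw [div_le_one (hden j)]
    linarith [hβ0 j]
  -- lower bound on α : α j ≥ -M
  have hαM : ∀ j, -(M : ℝ) ≤ α j := by
    intro j
    obtain ⟨nn, h1, h2⟩ := (hA ▸ hα j).1
    have hlow : -((m : ℝ) * M) ≤ ∑ i, a i * (nn i : ℝ) := by
      have : ∑ i, a i * (-((m : ℝ) * M)) ≤ ∑ i, a i * (nn i : ℝ) := by
        apply Finset.sum_le_sum
        intro i _
        have : -((m : ℝ) * M) ≤ (nn i : ℝ) := by exact_mod_cast h1 i
        exact mul_le_mul_of_nonneg_left this (ha i).le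
      calc -((m : ℝ) * M) = ∑ i, a i * (-((m : ℝ) * M)) := by
            rw [← Finset.sum_mul, hasum, one_mul]
        _ ≤ _ := this
    rw [h2, le_div_iff₀ hmR]
    calc -(M : ℝ) * m = -((m : ℝ) * M) := by ring
      _ ≤ _ := hlow
  -- A is finite
  have hAfin : A.Finite := by
    apply Set.Finite.subset (aux_fin a ha m hmR (fun _ => -(m * M : ℤ)) 0)
    rw [hA]
    rintro x ⟨hx1, hx2⟩
    exact ⟨hx1, le_of_lt hx2⟩
  -- pick a base index
  obtain ⟨j₁⟩ := ‹Nonempty Λ›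
  set t₁ : ℝ := t j₁ with ht₁
  have ht₁pos : 0 < t₁ := ht_pos j₁
  set C : ℝ := (M : ℝ) / t₁ with hC
  -- if t j ≥ t₁ then β j ≤ C
  have hbound : ∀ j, t₁ ≤ t j → β j ≤ C := by
    intro j hj
    have h1 : t₁ * (β j - α j) ≤ -(α j) := by
      have := (le_div_iff₀ (hden j)).mp hj
      linarith
    have h2 : -(α j) ≤ (M : ℝ) := by linarith [hαM j]
    have h3 : t₁ * β j ≤ (M : ℝ) := by nlinarith [hαneg j, ht₁pos]
    rw [hC, le_div_iff₀ ht₁pos]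
    linarith [h3]
  -- B ∩ Iic C is finite
  have hBCfin : (B ∩ Set.Iic C).Finite := by
    apply Set.Finite.subset (aux_fin c hc m hmR (fun _ => 0) C)
    rw [hB]
    rintro x ⟨⟨hx1, _⟩, hx2⟩
    exact ⟨hx1, hx2⟩
  -- the set of large thresholds is finite
  set T' : Set ℝ := {x | ∃ j, t j = x ∧ t₁ ≤ x} with hT'
  have hT'fin : T'.Finite := by
    apply Set.Finite.subset
      (Set.Finite.image (fun p : ℝ × ℝ => (-(p.1)) / (p.2 - p.1)) (hAfin.prod hBCfin))
    rintro x ⟨j, hj1, hj2⟩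
    exact ⟨(α j, β j), ⟨hα j, hβ j, hbound j (hj1 ▸ hj2)⟩, hj1⟩
  have hT'ne : T'.Nonempty := ⟨t₁, j₁, rfl, le_refl _⟩
  obtain ⟨x₀, hx₀mem, hx₀max⟩ := hT'fin.exists_maximalFor id T' hT'ne
  have hmax : ∀ y ∈ T', y ≤ x₀ := by
    intro y hy
    by_contra h
    push_neg at h
    exact absurd (hx₀max hy h.le) (by simp; linarith)
  obtain ⟨j₀, hj₀, hj₀ge⟩ := hx₀mem
  refine ⟨j₀, ?_⟩
  have hbdd : BddAbove (Set.range t) := ⟨1, by rintro x ⟨j, rfl⟩; exact ht_le1 j⟩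
  apply le_antisymm
  · exact le_ciSup hbdd j₀
  · apply ciSup_le
    intro j
    show t j ≤ t j₀
    rcases le_or_gt t₁ (t j) with h | h
    · have : t j ∈ T' := ⟨j, rfl, h⟩
      have := hmax _ this
      linarith [hj₀ ▸ this]
    · have ht₁le : t₁ ≤ x₀ := hmax t₁ ⟨j₁, rfl, le_refl _⟩
      rw [hj₀]
      linarith
end
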